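/- arXiv:2211.04936 — 3 statements merged into one kernel-verified Lean document; each statement's English description precedes it below -/
import Mathlib

section
/- Let A ∈ GL(d, ℝ) be expansive with dilated cubes 𝒟_A = {A^i([0,1]^d+k) : i ∈ ℤ, k ∈ ℤ^d} and tents 𝒯(D') = {D ∈ 𝒟_A : m(D ∩ D') > 0, scale(D) ≤ scale(D')}. For a complex sequence c = (c_D)_{D∈𝒟_A} define ‖c‖ = sup_{D'∈𝒟_A} (1/m(D')) ∫_{D'} ∑_{D: scale(D) ≤ scale(D')} m(D)^{−1/2} |c_D| 𝟙_D(x) dx. Then ‖c‖ ≍ sup_{D'∈𝒟_A} (1/m(D')) ∑_{D ∈ 𝒯(D')} m(D)^{1/2} |c_D|, with implicit constants independent of c. -/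
open MeasureTheory
open scoped Pointwise ENNReal Classical

/-- A real matrix is expansive if it is invertible and all its complex eigenvalues
have absolute value strictly greater than `1`. -/
def Expansive {d : ℕ} (A : Matrix (Fin d) (Fin d) ℝ) : Prop :=
  IsUnit A ∧ ∀ μ ∈ spectrum ℂ (A.map (algebraMap ℝ ℂ)), 1 < ‖μ‖

/-- The action of a matrix on Euclidean space. -/
def ms {d : ℕ} (A : Matrix (Fin d) (Fin d) ℝ) (x : EuclideanSpace ℝ (Fin d)) :
    EuclideanSpace ℝ (Fin d) := WithLp.toLp 2 (A.mulVec x)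

/-- The integer vector `n` regarded as a point of Euclidean space. -/
def zvec {d : ℕ} (n : Fin d → ℤ) : EuclideanSpace ℝ (Fin d) := WithLp.toLp 2 (fun t => (n t : ℝ))

/-- The dilated cube `A^i ([0,1]^d + k)`. -/
def dcube {d : ℕ} (A : Matrix (Fin d) (Fin d) ℝ) (i : ℤ) (k : Fin d → ℤ) :
    Set (EuclideanSpace ℝ (Fin d)) :=
  ms (A ^ i) '' {x | ∀ t, (k t : ℝ) ≤ x t ∧ x t ≤ (k t : ℝ) + 1}

/-- The `f⁰_{∞,1}(A)` sequence norm: `sup_{D'} m(D')⁻¹ ∫_{D'} ∑_{scale(D) ≤ scale(D')}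
m(D)^{-1/2} |c_D| 𝟙_D`. -/
noncomputable def fNormInfOne {d : ℕ} (A : Matrix (Fin d) (Fin d) ℝ)
    (c : ℤ → (Fin d → ℤ) → ℂ) : ℝ≥0∞ :=
  ⨆ (j : ℤ) (l : Fin d → ℤ),
    (volume (dcube A j l))⁻¹ *
      ∫⁻ x in dcube A j l,
        ∑' (i : ℤ) (k : Fin d → ℤ),
          (if i ≤ j then
            (dcube A i k).indicator
              (fun _ => volume (dcube A i k) ^ (-(1 / 2 : ℝ)) *
                ENNReal.ofReal (‖c i k‖)) x
          else 0)

/-- The tent form of the `f⁰_{∞,1}(A)` sequence norm: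
`sup_{D'} m(D')⁻¹ ∑_{D ∈ 𝒯(D')} m(D)^{1/2} |c_D|`. -/
noncomputable def tentNorm {d : ℕ} (A : Matrix (Fin d) (Fin d) ℝ)
    (c : ℤ → (Fin d → ℤ) → ℂ) : ℝ≥0∞ :=
  ⨆ (j : ℤ) (l : Fin d → ℤ),
    (volume (dcube A j l))⁻¹ *
      ∑' (i : ℤ) (k : Fin d → ℤ),
        (if i ≤ j ∧ 0 < volume (dcube A i k ∩ dcube A j l) then
          volume (dcube A i k) ^ (1 / 2 : ℝ) * ENNReal.ofReal (‖c i k‖)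
        else 0)

open scoped NNReal

set_option maxHeartbeats 1000000

attribute [local instance] Matrix.linftyOpNormedRing Matrix.linftyOpNormedAlgebra

lemma norm_map_complex {d : ℕ} (B : Matrix (Fin d) (Fin d) ℝ) :
    ‖B.map (algebraMap ℝ ℂ)‖₊ = ‖B‖₊ := by
  simp only [Matrix.linfty_opNNNorm_def, Matrix.map_apply]
  congr 1
  ext i
  congr 1
  ext j
  simp [nnnorm]

lemma spectral_radius_lt {d : ℕ} (A : Matrix (Fin d) (Fin d) ℝ) (hA : Expansive A) :
    spectralRadius ℂ ((A⁻¹).map (algebraMap ℝ ℂ)) < 1 := by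
  obtain ⟨hu, hspec⟩ := hA
  set f := (algebraMap ℝ ℂ)
  have hdet : IsUnit A.det := (Matrix.isUnit_iff_isUnit_det A).mp hu
  have hAc : IsUnit (A.map f) := hu.map (RingHom.mapMatrix f : _ →+* Matrix (Fin d) (Fin d) ℂ)
  obtain ⟨v, hv⟩ := hAc
  have hmul : ((A⁻¹).map f) * (A.map f) = 1 := by
    have : ((A⁻¹ * A).map f) = ((A⁻¹).map f) * (A.map f) :=
      map_mul (RingHom.mapMatrix f : _ →+* Matrix (Fin d) (Fin d) ℂ) A⁻¹ A
    rw [← this, Matrix.nonsing_inv_mul A hdet]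
    exact map_one (RingHom.mapMatrix f : _ →+* Matrix (Fin d) (Fin d) ℂ)
  have hmulv : (A⁻¹).map f * (v : Matrix (Fin d) (Fin d) ℂ) = 1 := by rw [hv]; exact hmul
  have hinv : (A⁻¹).map f = ((v⁻¹ : (Matrix (Fin d) (Fin d) ℂ)ˣ) : Matrix (Fin d) (Fin d) ℂ) := by
    calc (A⁻¹).map f
        = (A⁻¹).map f * ((v : Matrix (Fin d) (Fin d) ℂ) *
            ((v⁻¹ : (Matrix (Fin d) (Fin d) ℂ)ˣ) : Matrix (Fin d) (Fin d) ℂ)) := by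
          rw [Units.mul_inv, mul_one]
      _ = ((A⁻¹).map f * (v : Matrix (Fin d) (Fin d) ℂ)) *
            ((v⁻¹ : (Matrix (Fin d) (Fin d) ℂ)ˣ) : Matrix (Fin d) (Fin d) ℂ) :=
          (mul_assoc _ _ _).symm
      _ = _ := by rw [hmulv, one_mul]
  have key : ∀ μ ∈ spectrum ℂ ((A⁻¹).map f), ‖μ‖ < 1 := by
    intro μ hμ
    rw [hinv] at hμ
    have hμ0 : μ ≠ 0 := by
      intro h
      rw [h] at hμ
      exact (spectrum.zero_notMem_iff ℂ).mpr (v⁻¹).isUnit hμ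
    set r : ℂˣ := Units.mk0 μ hμ0
    have hmem : (↑r⁻¹ : ℂ) ∈ spectrum ℂ (↑v : Matrix (Fin d) (Fin d) ℂ) := by
      have := (spectrum.inv_mem_iff (r := r) (a := v⁻¹)).mp hμ
      simpa using this
    have h1 : 1 < ‖(↑r⁻¹ : ℂ)‖ := hspec _ (by rwa [hv] at hmem)
    have h2 : 1 < ‖μ‖⁻¹ := by
      have : (↑r⁻¹ : ℂ) = μ⁻¹ := rfl
      rw [this] at h1
      simpa [map_inv₀] using h1
    exact (one_lt_inv_iff₀.mp h2).2
  rcases Set.eq_empty_or_nonempty (spectrum ℂ ((A⁻¹).map f)) with he | hne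
  · rw [spectralRadius, he]
    simp
  · have hK : IsCompact (spectrum ℂ ((A⁻¹).map f)) := spectrum.isCompact _
    obtain ⟨μ₀, hμ₀, hmax⟩ := hK.exists_isMaxOn hne (continuous_norm.continuousOn)
    calc spectralRadius ℂ ((A⁻¹).map f) ≤ (‖μ₀‖₊ : ℝ≥0∞) := by
          refine iSup₂_le fun μ hμ => ?_
          exact ENNReal.coe_le_coe.mpr (by exact_mod_cast hmax hμ)
      _ < 1 := by
          rw [← ENNReal.coe_one, ENNReal.coe_lt_coe]
          exact_mod_cast key μ₀ hμ₀

lemma spectral_bound {d : ℕ} (A : Matrix (Fin d) (Fin d) ℝ) (hA : Expansive A) :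
    ∃ C : ℝ≥0, ∀ s : ℕ, ‖(A⁻¹ ^ s : Matrix (Fin d) (Fin d) ℝ)‖₊ ≤ C := by
  set f := (algebraMap ℝ ℂ)
  set a : Matrix (Fin d) (Fin d) ℂ := (A⁻¹).map f with ha
  have hrad := spectral_radius_lt A hA
  have hg := spectrum.pow_nnnorm_pow_one_div_tendsto_nhds_spectralRadius a
  have hev : ∀ᶠ n : ℕ in Filter.atTop, (‖a ^ n‖₊ : ℝ≥0∞) ^ (1 / (n:ℝ)) < 1 :=
    hg.eventually_lt_const hrad
  obtain ⟨n₀, hlt, hn₀1⟩ := (hev.and (Filter.eventually_ge_atTop 1)).exists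
  have hn1 : ‖a ^ n₀‖₊ < 1 := by
    by_contra h
    push_neg at h
    have h1 : (1:ℝ≥0∞) ≤ (‖a ^ n₀‖₊ : ℝ≥0∞) := by exact_mod_cast h
    have : (1:ℝ≥0∞) ^ (1 / (n₀:ℝ)) ≤ (‖a ^ n₀‖₊ : ℝ≥0∞) ^ (1 / (n₀:ℝ)) :=
      ENNReal.rpow_le_rpow h1 (by positivity)
    rw [ENNReal.one_rpow] at this
    exact absurd hlt (not_lt.mpr this)
  have hnorm : ∀ s : ℕ, ‖(A⁻¹ ^ s : Matrix (Fin d) (Fin d) ℝ)‖₊ = ‖a ^ s‖₊ := by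
    intro s
    have : a ^ s = ((A⁻¹ ^ s : Matrix (Fin d) (Fin d) ℝ)).map f := by
      rw [ha]
      exact (map_pow (RingHom.mapMatrix f : _ →+* Matrix (Fin d) (Fin d) ℂ) A⁻¹ s).symm
    rw [this, norm_map_complex]
  refine ⟨(Finset.range n₀).sup fun r => ‖a ^ r‖₊, fun s => ?_⟩
  rw [hnorm]
  induction s using Nat.strong_induction_on with
  | _ s ih =>
    by_cases hs : s < n₀
    · exact Finset.le_sup (f := fun r => ‖a ^ r‖₊) (Finset.mem_range.mpr hs)
    · push_neg at hs
      have hdecomp : s = n₀ + (s - n₀) := by omega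
      rw [hdecomp, pow_add]
      calc ‖a ^ n₀ * a ^ (s - n₀)‖₊ ≤ ‖a ^ n₀‖₊ * ‖a ^ (s - n₀)‖₊ := nnnorm_mul_le _ _
        _ ≤ 1 * ((Finset.range n₀).sup fun r => ‖a ^ r‖₊) := mul_le_mul' hn1.le (ih _ (by omega))
        _ = _ := one_mul _

set_option maxHeartbeats 1000000

noncomputable section AuxSection

namespace Stmt12Aux

variable {d : ℕ}

/-- The translated unit cube as a subset of Euclidean space. -/
def cube (k : Fin d → ℤ) : Set (EuclideanSpace ℝ (Fin d)) :=
  {x | ∀ t, (k t : ℝ) ≤ x t ∧ x t ≤ (k t : ℝ) + 1}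

lemma dcube_eq (A : Matrix (Fin d) (Fin d) ℝ) (i : ℤ) (k : Fin d → ℤ) :
    dcube A i k = ms (A ^ i) '' cube k := rfl

lemma cube_eq_preimage (k : Fin d → ℤ) :
    cube k = (MeasurableEquiv.toLp 2 (Fin d → ℝ)).symm ⁻¹'
      (Set.univ.pi fun t => Set.Icc (k t : ℝ) ((k t : ℝ) + 1)) := by
  ext x
  simp only [cube, Set.mem_setOf_eq, Set.mem_preimage, Set.mem_pi, Set.mem_univ,
    forall_true_left, Set.mem_Icc]
  constructor
  · intro h t
    exact ⟨(h t).1, (h t).2⟩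
  · intro h t
    exact ⟨(h t).1, (h t).2⟩

lemma isClosed_cube (k : Fin d → ℤ) : IsClosed (cube (d := d) k) := by
  have : cube k = ⋂ t : Fin d,
      ((fun x : EuclideanSpace ℝ (Fin d) => x t) ⁻¹' Set.Icc (k t : ℝ) ((k t : ℝ) + 1)) := by
    ext x; simp [cube, Set.mem_Icc, forall_and]
  rw [this]
  refine isClosed_iInter fun t => IsClosed.preimage ?_ isClosed_Icc
  exact (EuclideanSpace.proj (𝕜 := ℝ) t).continuous

lemma isCompact_cube (k : Fin d → ℤ) : IsCompact (cube (d := d) k) := by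
  have hT : IsCompact (Set.univ.pi fun t => Set.Icc (k t : ℝ) ((k t : ℝ) + 1)) :=
    isCompact_univ_pi fun t => isCompact_Icc
  have himg := hT.image (EuclideanSpace.equiv (Fin d) ℝ).symm.continuous
  have heq : (EuclideanSpace.equiv (Fin d) ℝ).symm ''
      (Set.univ.pi fun t => Set.Icc (k t : ℝ) ((k t : ℝ) + 1)) = cube k := by
    ext x
    simp only [Set.mem_image, Set.mem_pi, Set.mem_univ, forall_true_left, Set.mem_Icc, cube,
      Set.mem_setOf_eq]
    constructor
    · rintro ⟨y, hy, rfl⟩ t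
      exact hy t
    · intro h
      exact ⟨(EuclideanSpace.equiv (Fin d) ℝ) x, fun t => h t, by simp⟩
  rwa [heq] at himg

lemma measurableSet_cube (k : Fin d → ℤ) : MeasurableSet (cube (d := d) k) :=
  (isClosed_cube k).measurableSet

lemma volume_cube (k : Fin d → ℤ) : volume (cube (d := d) k) = 1 := by
  rw [cube_eq_preimage]
  rw [(EuclideanSpace.volume_preserving_symm_measurableEquiv_toLp (Fin d)).measure_preimage
    ((MeasurableSet.univ_pi fun t => measurableSet_Icc).nullMeasurableSet)]
  rw [volume_pi_pi]
  simp [Real.volume_Icc]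

/-- `ms M` as a linear map. -/
def msL (M : Matrix (Fin d) (Fin d) ℝ) :
    EuclideanSpace ℝ (Fin d) →ₗ[ℝ] EuclideanSpace ℝ (Fin d) where
  toFun := ms M
  map_add' x y := congrArg (WithLp.toLp 2) (Matrix.mulVec_add M x y)
  map_smul' r x := congrArg (WithLp.toLp 2) (Matrix.mulVec_smul M r x)

lemma continuous_ms (M : Matrix (Fin d) (Fin d) ℝ) : Continuous (ms M) :=
  (msL M).continuous_of_finiteDimensional

lemma det_msL (M : Matrix (Fin d) (Fin d) ℝ) : LinearMap.det (msL M) = M.det := by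
  have h : msL M =
      (((WithLp.linearEquiv 2 ℝ (Fin d → ℝ)).symm :
          (Fin d → ℝ) ≃ₗ[ℝ] EuclideanSpace ℝ (Fin d)) :
        (Fin d → ℝ) →ₗ[ℝ] EuclideanSpace ℝ (Fin d)) ∘ₗ
      (Matrix.mulVecLin M) ∘ₗ
      (((WithLp.linearEquiv 2 ℝ (Fin d → ℝ)).symm.symm :
          EuclideanSpace ℝ (Fin d) ≃ₗ[ℝ] (Fin d → ℝ)) :
        EuclideanSpace ℝ (Fin d) →ₗ[ℝ] (Fin d → ℝ)) := LinearMap.ext fun x => by rfl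
  rw [h, LinearMap.det_conj (Matrix.mulVecLin M) (WithLp.linearEquiv 2 ℝ (Fin d → ℝ)).symm]
  rw [← Matrix.toLin'_apply' M, LinearMap.det_toLin']

lemma volume_dcube (A : Matrix (Fin d) (Fin d) ℝ) (i : ℤ) (k : Fin d → ℤ) :
    volume (dcube A i k) = ENNReal.ofReal |(A ^ i).det| := by
  rw [dcube_eq]
  have : ms (A ^ i) '' cube k = (msL (A ^ i)) '' cube k := rfl
  rw [this, MeasureTheory.Measure.addHaar_image_linearMap, det_msL, volume_cube, mul_one]

lemma volume_dcube_pos {A : Matrix (Fin d) (Fin d) ℝ} (hdet : IsUnit A.det) (i : ℤ)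
    (k : Fin d → ℤ) : 0 < volume (dcube A i k) := by
  rw [volume_dcube]
  have : (A ^ i).det ≠ 0 := (hdet.det_zpow i).ne_zero
  exact ENNReal.ofReal_pos.mpr (abs_pos.mpr this)

lemma volume_dcube_ne_top (A : Matrix (Fin d) (Fin d) ℝ) (i : ℤ) (k : Fin d → ℤ) :
    volume (dcube A i k) ≠ ⊤ := by
  rw [volume_dcube]; exact ENNReal.ofReal_ne_top

lemma volume_dcube_eq (A : Matrix (Fin d) (Fin d) ℝ) (i : ℤ) (k k' : Fin d → ℤ) :
    volume (dcube A i k) = volume (dcube A i k') := by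
  rw [volume_dcube, volume_dcube]

lemma measurableSet_dcube (A : Matrix (Fin d) (Fin d) ℝ) (i : ℤ) (k : Fin d → ℤ) :
    MeasurableSet (dcube A i k) := by
  rw [dcube_eq]
  exact (((isCompact_cube k).image (continuous_ms _)).isClosed).measurableSet

lemma ms_ms (M N : Matrix (Fin d) (Fin d) ℝ) (x : EuclideanSpace ℝ (Fin d)) :
    ms M (ms N x) = ms (M * N) x :=
  congrArg (WithLp.toLp 2) (Matrix.mulVec_mulVec x M N)

lemma ms_one (x : EuclideanSpace ℝ (Fin d)) : ms (1 : Matrix (Fin d) (Fin d) ℝ) x = x :=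
  congrArg (WithLp.toLp 2) (Matrix.one_mulVec x)

lemma zpow_mul_zpow_neg {A : Matrix (Fin d) (Fin d) ℝ} (hdet : IsUnit A.det) (i : ℤ) :
    A ^ i * A ^ (-i) = 1 := by
  rw [← Matrix.zpow_add hdet, add_neg_cancel, zpow_zero]

lemma ms_zpow_neg_ms_zpow {A : Matrix (Fin d) (Fin d) ℝ} (hdet : IsUnit A.det) (i : ℤ)
    (x : EuclideanSpace ℝ (Fin d)) : ms (A ^ (-i)) (ms (A ^ i) x) = x := by
  rw [ms_ms, ← Matrix.zpow_add hdet, neg_add_cancel, zpow_zero, ms_one]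

lemma ms_zpow_ms_zpow_neg {A : Matrix (Fin d) (Fin d) ℝ} (hdet : IsUnit A.det) (i : ℤ)
    (x : EuclideanSpace ℝ (Fin d)) : ms (A ^ i) (ms (A ^ (-i)) x) = x := by
  rw [ms_ms, zpow_mul_zpow_neg hdet, ms_one]


lemma mem_dcube {A : Matrix (Fin d) (Fin d) ℝ} (hdet : IsUnit A.det) {i : ℤ} {k : Fin d → ℤ}
    {x : EuclideanSpace ℝ (Fin d)} :
    x ∈ dcube A i k ↔ ms (A ^ (-i)) x ∈ cube k := by
  constructor
  · rintro ⟨y, hy, rfl⟩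
    rwa [ms_zpow_neg_ms_zpow hdet]
  · intro h
    exact ⟨ms (A ^ (-i)) x, h, ms_zpow_ms_zpow_neg hdet i x⟩

attribute [local instance] Matrix.linftyOpNormedRing Matrix.linftyOpNormedAlgebra

/-- Coordinatewise contraction bound from a uniform norm bound on negative powers. -/
lemma contract {A : Matrix (Fin d) (Fin d) ℝ} {Cb : ℝ≥0}
    (hCb : ∀ s : ℕ, ‖(A⁻¹ ^ s : Matrix (Fin d) (Fin d) ℝ)‖₊ ≤ Cb) (s : ℕ)
    (v : Fin d → ℝ) (hv : ∀ t, |v t| ≤ 1) (t : Fin d) :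
    |((A⁻¹ ^ s : Matrix (Fin d) (Fin d) ℝ).mulVec v) t| ≤ (Cb : ℝ) := by
  have h1 : ‖v‖ ≤ 1 := by
    rw [pi_norm_le_iff_of_nonneg zero_le_one]
    intro t
    exact hv t
  have h2 : ‖(A⁻¹ ^ s : Matrix (Fin d) (Fin d) ℝ).mulVec v‖ ≤
      ‖(A⁻¹ ^ s : Matrix (Fin d) (Fin d) ℝ)‖ * ‖v‖ :=
    Matrix.linfty_opNorm_mulVec _ _
  have h3 : ‖(A⁻¹ ^ s : Matrix (Fin d) (Fin d) ℝ)‖ ≤ (Cb : ℝ) := by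
    have := hCb s
    exact_mod_cast this
  calc |((A⁻¹ ^ s : Matrix (Fin d) (Fin d) ℝ).mulVec v) t|
      ≤ ‖(A⁻¹ ^ s : Matrix (Fin d) (Fin d) ℝ).mulVec v‖ := by
        rw [← Real.norm_eq_abs]
        exact norm_le_pi_norm _ t
    _ ≤ ‖(A⁻¹ ^ s : Matrix (Fin d) (Fin d) ℝ)‖ * ‖v‖ := h2
    _ ≤ (Cb : ℝ) * 1 := by
        apply mul_le_mul h3 h1 (norm_nonneg _) (le_trans (norm_nonneg _) h3)
    _ = (Cb : ℝ) := mul_one _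

/-- The tent-cover lemma: a dilated cube of smaller scale meeting `dcube A j l`
is contained in boundedly many translates of `dcube A j l`. -/
lemma cover {A : Matrix (Fin d) (Fin d) ℝ} (hdet : IsUnit A.det) {Cb : ℝ≥0}
    (hCb : ∀ s : ℕ, ‖(A⁻¹ ^ s : Matrix (Fin d) (Fin d) ℝ)‖₊ ≤ Cb)
    {i j : ℤ} {k l : Fin d → ℤ} (hij : i ≤ j)
    (hne : (dcube A i k ∩ dcube A j l).Nonempty) :
    dcube A i k ⊆ ⋃ n ∈ Fintype.piFinset (fun _ : Fin d =>
      Finset.Icc (-(⌈(Cb : ℝ)⌉₊ + 1 : ℤ)) (⌈(Cb : ℝ)⌉₊ + 1)), dcube A j (l + n) := by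
  intro x hx
  obtain ⟨u, hu, rfl⟩ := hx
  obtain ⟨y, hyk, hyl⟩ := hne
  obtain ⟨v, hv, hyv⟩ := hyk
  obtain ⟨w, hw, hyw⟩ := hyl
  set s : ℕ := (j - i).toNat with hs
  have hsij : i - j = -(s : ℤ) := by
    rw [hs, Int.toNat_of_nonneg (by omega)]
    omega
  have hpow : A ^ (i - j) = (A⁻¹ ^ s : Matrix (Fin d) (Fin d) ℝ) := by
    rw [hsij, Matrix.zpow_neg_natCast, Matrix.inv_pow']
  -- the key point z = A^{-j} (A^i u)
  set z : EuclideanSpace ℝ (Fin d) := ms (A ^ (-j)) (ms (A ^ i) u) with hz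
  have hzeq : z = ms (A ^ (i - j)) u := by
    rw [hz, ms_ms, ← Matrix.zpow_add hdet, show -j + i = i - j from by omega]
  have hweq : ms (A ^ (i - j)) v = w := by
    have h1 : ms (A ^ (-j)) y = ms (A ^ (i - j)) v := by
      rw [← hyv, ms_ms, ← Matrix.zpow_add hdet, show -j + i = i - j from by omega]
    have h2 : ms (A ^ (-j)) y = w := by
      rw [← hyw, ms_zpow_neg_ms_zpow hdet]
    rw [← h1, h2]
  have hdiff : ∀ t, |z t - w t| ≤ (Cb : ℝ) := by
    intro t
    have hzw : z - w = ms (A ^ (i - j)) (u - v) := by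
      rw [hzeq, ← hweq]
      simp only [ms, WithLp.ofLp_sub, Matrix.mulVec_sub, WithLp.toLp_sub]
    have huv : ∀ t, |(u - v) t| ≤ 1 := by
      intro t
      have h1 := hu t
      have h2 := hv t
      have : (u - v) t = u t - v t := rfl
      rw [this, abs_le]
      constructor <;> linarith
    have h4 : z t - w t = ms (A ^ (i - j)) (u - v) t := by
      rw [← hzw]
      rfl
    rw [h4, hpow]
    exact contract hCb s (WithLp.ofLp (u - v)) huv t
  set n : Fin d → ℤ := fun t => ⌊z t⌋ - l t with hn
  have hCbN : (Cb : ℝ) ≤ (⌈(Cb : ℝ)⌉₊ : ℝ) := Nat.le_ceil _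
  refine Set.mem_iUnion₂.mpr ⟨n, ?_, ?_⟩
  · rw [Fintype.mem_piFinset]
    intro t
    rw [Finset.mem_Icc]
    have hw1 := (hw t).1
    have hw2 := (hw t).2
    have hd := hdiff t
    rw [abs_le] at hd
    constructor
    · rw [hn]
      simp only
      have : ((l t - (⌈(Cb : ℝ)⌉₊ + 1 : ℤ) : ℤ) : ℝ) ≤ z t := by
        push_cast
        push_cast at hCbN
        linarith
      have hfl := Int.le_floor.mpr this
      omega
    · rw [hn]
      simp only
      have : z t < ((l t + (⌈(Cb : ℝ)⌉₊ + 1 : ℤ) + 1 : ℤ) : ℝ) := by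
        push_cast
        push_cast at hCbN
        linarith
      have hfl := Int.floor_lt.mpr this
      omega
  · rw [mem_dcube hdet]
    have hzx : ms (A ^ (-j)) (ms (A ^ i) u) = z := rfl
    rw [hzx]
    intro t
    have h1 : ((l + n) t : ℝ) = ((⌊z t⌋ : ℤ) : ℝ) := by
      simp [hn]
    rw [h1]
    exact ⟨Int.floor_le _, (Int.lt_floor_add_one _).le⟩



lemma neg_half_mul (v : ℝ≥0∞) (h0 : v ≠ 0) (ht : v ≠ ⊤) :
    v ^ (-(1 / 2 : ℝ)) * v = v ^ (1 / 2 : ℝ) := by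
  nth_rewrite 2 [← ENNReal.rpow_one v]
  rw [← ENNReal.rpow_add _ _ h0 ht]
  norm_num

lemma integral_eq (A : Matrix (Fin d) (Fin d) ℝ) (c : ℤ → (Fin d → ℤ) → ℂ) (j : ℤ)
    (l : Fin d → ℤ) :
    ∫⁻ x in dcube A j l,
        ∑' (i : ℤ) (k : Fin d → ℤ),
          (if i ≤ j then
            (dcube A i k).indicator
              (fun _ => volume (dcube A i k) ^ (-(1 / 2 : ℝ)) *
                ENNReal.ofReal (‖c i k‖)) x
          else 0)
    = ∑' (i : ℤ) (k : Fin d → ℤ),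
        (if i ≤ j then
          volume (dcube A i k) ^ (-(1 / 2 : ℝ)) * ENNReal.ofReal (‖c i k‖) *
            volume (dcube A i k ∩ dcube A j l)
        else 0) := by
  have mterm : ∀ (i : ℤ) (k : Fin d → ℤ), Measurable fun x : EuclideanSpace ℝ (Fin d) =>
      (if i ≤ j then
        (dcube A i k).indicator
          (fun _ => volume (dcube A i k) ^ (-(1 / 2 : ℝ)) *
            ENNReal.ofReal (‖c i k‖)) x
      else 0) := by
    intro i k
    by_cases h : i ≤ j
    · simp only [if_pos h]
      exact measurable_const.indicator (measurableSet_dcube A i k)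
    · simp only [if_neg h]
      exact measurable_const
  rw [lintegral_tsum fun i =>
    (Measurable.ennreal_tsum fun k => mterm i k).aemeasurable]
  refine tsum_congr fun i => ?_
  rw [lintegral_tsum fun k => (mterm i k).aemeasurable]
  refine tsum_congr fun k => ?_
  by_cases h : i ≤ j
  · simp only [if_pos h]
    rw [lintegral_indicator_const (measurableSet_dcube A i k),
      Measure.restrict_apply (measurableSet_dcube A i k)]
  · simp only [if_neg h]
    exact lintegral_zero

end Stmt12Aux

end AuxSection


open Stmt12Aux in
/-- The `f⁰_{∞,1}(A)` norm is equivalent to its tent form, with constants independent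
of the sequence. -/
theorem stmt12 {d : ℕ} (A : Matrix (Fin d) (Fin d) ℝ) (hA : Expansive A) :
    ∃ C : ℝ≥0∞, 0 < C ∧ C < ⊤ ∧ ∀ c : ℤ → (Fin d → ℤ) → ℂ,
      fNormInfOne A c ≤ C * tentNorm A c ∧ tentNorm A c ≤ C * fNormInfOne A c := by
  have hdet : IsUnit A.det := (Matrix.isUnit_iff_isUnit_det A).mp hA.1
  obtain ⟨Cb, hCb⟩ := spectral_bound A hA
  set F : Finset (Fin d → ℤ) := Fintype.piFinset (fun _ : Fin d =>
    Finset.Icc (-(⌈(Cb : ℝ)⌉₊ + 1 : ℤ)) (⌈(Cb : ℝ)⌉₊ + 1)) with hF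
  have hF0 : (0 : Fin d → ℤ) ∈ F := by
    rw [hF, Fintype.mem_piFinset]
    intro t
    rw [Finset.mem_Icc]
    simp only [Pi.zero_apply]
    omega
  have hcard : 0 < F.card := Finset.card_pos.mpr ⟨0, hF0⟩
  have hC1 : (1 : ℝ≥0∞) ≤ (F.card : ℝ≥0∞) := by exact_mod_cast hcard
  refine ⟨(F.card : ℝ≥0∞), by exact_mod_cast hcard, ENNReal.natCast_lt_top _, fun c => ?_⟩
  constructor
  · -- easy direction
    unfold fNormInfOne
    refine iSup₂_le fun j l => ?_
    rw [integral_eq A c j l]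
    have hterm : (∑' (i : ℤ) (k : Fin d → ℤ),
        (if i ≤ j then
          volume (dcube A i k) ^ (-(1 / 2 : ℝ)) * ENNReal.ofReal (‖c i k‖) *
            volume (dcube A i k ∩ dcube A j l)
        else 0))
        ≤ ∑' (i : ℤ) (k : Fin d → ℤ),
          (if i ≤ j ∧ 0 < volume (dcube A i k ∩ dcube A j l) then
            volume (dcube A i k) ^ (1 / 2 : ℝ) * ENNReal.ofReal (‖c i k‖)
          else 0) := by
      refine ENNReal.tsum_le_tsum fun i => ENNReal.tsum_le_tsum fun k => ?_
      by_cases h1 : i ≤ j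
      · by_cases h2 : 0 < volume (dcube A i k ∩ dcube A j l)
        · rw [if_pos h1, if_pos ⟨h1, h2⟩]
          have hv0 : volume (dcube A i k) ≠ 0 := (volume_dcube_pos hdet i k).ne'
          have hvt : volume (dcube A i k) ≠ ⊤ := volume_dcube_ne_top A i k
          calc volume (dcube A i k) ^ (-(1 / 2 : ℝ)) * ENNReal.ofReal (‖c i k‖) *
                volume (dcube A i k ∩ dcube A j l)
              ≤ volume (dcube A i k) ^ (-(1 / 2 : ℝ)) * ENNReal.ofReal (‖c i k‖) *
                volume (dcube A i k) := by
                exact mul_le_mul_right (measure_mono Set.inter_subset_left) _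
            _ = volume (dcube A i k) ^ (1 / 2 : ℝ) * ENNReal.ofReal (‖c i k‖) := by
                rw [mul_right_comm, neg_half_mul _ hv0 hvt]
        · have h2' : volume (dcube A i k ∩ dcube A j l) = 0 := by
            simpa using not_lt.mp h2
          rw [if_pos h1, if_neg (fun hc => h2 hc.2), h2', mul_zero]
      · rw [if_neg h1, if_neg (fun hc => h1 hc.1)]
    calc (volume (dcube A j l))⁻¹ * (∑' (i : ℤ) (k : Fin d → ℤ),
        (if i ≤ j then
          volume (dcube A i k) ^ (-(1 / 2 : ℝ)) * ENNReal.ofReal (‖c i k‖) *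
            volume (dcube A i k ∩ dcube A j l)
        else 0))
        ≤ (volume (dcube A j l))⁻¹ * ∑' (i : ℤ) (k : Fin d → ℤ),
          (if i ≤ j ∧ 0 < volume (dcube A i k ∩ dcube A j l) then
            volume (dcube A i k) ^ (1 / 2 : ℝ) * ENNReal.ofReal (‖c i k‖)
          else 0) := mul_le_mul_right hterm _
      _ ≤ tentNorm A c := by
          unfold tentNorm
          exact le_iSup₂ (f := fun (j : ℤ) (l : Fin d → ℤ) =>
            (volume (dcube A j l))⁻¹ * ∑' (i : ℤ) (k : Fin d → ℤ),
              (if i ≤ j ∧ 0 < volume (dcube A i k ∩ dcube A j l) then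
                volume (dcube A i k) ^ (1 / 2 : ℝ) * ENNReal.ofReal (‖c i k‖)
              else 0)) j l
      _ ≤ (F.card : ℝ≥0∞) * tentNorm A c := le_mul_of_one_le_left zero_le hC1
  · -- hard direction
    unfold tentNorm
    refine iSup₂_le fun j l => ?_
    have hv0 : volume (dcube A j l) ≠ 0 := (volume_dcube_pos hdet j l).ne'
    have hvt : volume (dcube A j l) ≠ ⊤ := volume_dcube_ne_top A j l
    have step1 : ∀ (i : ℤ) (k : Fin d → ℤ),
        (if i ≤ j ∧ 0 < volume (dcube A i k ∩ dcube A j l) then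
          volume (dcube A i k) ^ (1 / 2 : ℝ) * ENNReal.ofReal (‖c i k‖)
        else 0)
        ≤ ∑ n ∈ F, (if i ≤ j then
            volume (dcube A i k) ^ (-(1 / 2 : ℝ)) * ENNReal.ofReal (‖c i k‖) *
              volume (dcube A i k ∩ dcube A j (l + n))
          else 0) := by
      intro i k
      by_cases hc : i ≤ j ∧ 0 < volume (dcube A i k ∩ dcube A j l)
      · rw [if_pos hc]
        obtain ⟨h1, h2⟩ := hc
        have hne : (dcube A i k ∩ dcube A j l).Nonempty :=
          MeasureTheory.nonempty_of_measure_ne_zero h2.ne'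
        have hcover := cover hdet hCb h1 hne
        have hm : volume (dcube A i k) ≤
            ∑ n ∈ F, volume (dcube A i k ∩ dcube A j (l + n)) := by
          calc volume (dcube A i k)
              ≤ volume (⋃ n ∈ F, dcube A i k ∩ dcube A j (l + n)) := by
                refine measure_mono fun x hx => ?_
                obtain ⟨n, hn, hxn⟩ := Set.mem_iUnion₂.mp (hcover hx)
                exact Set.mem_iUnion₂.mpr ⟨n, hn, hx, hxn⟩
            _ ≤ ∑ n ∈ F, volume (dcube A i k ∩ dcube A j (l + n)) :=
                measure_biUnion_finset_le F _
        have hv0' : volume (dcube A i k) ≠ 0 := (volume_dcube_pos hdet i k).ne'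
        have hvt' : volume (dcube A i k) ≠ ⊤ := volume_dcube_ne_top A i k
        calc volume (dcube A i k) ^ (1 / 2 : ℝ) * ENNReal.ofReal (‖c i k‖)
            = volume (dcube A i k) ^ (-(1 / 2 : ℝ)) * ENNReal.ofReal (‖c i k‖) *
              volume (dcube A i k) := by
              rw [mul_right_comm, neg_half_mul _ hv0' hvt']
          _ ≤ volume (dcube A i k) ^ (-(1 / 2 : ℝ)) * ENNReal.ofReal (‖c i k‖) *
              ∑ n ∈ F, volume (dcube A i k ∩ dcube A j (l + n)) := mul_le_mul_right hm _
          _ = ∑ n ∈ F, volume (dcube A i k) ^ (-(1 / 2 : ℝ)) *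
              ENNReal.ofReal (‖c i k‖) * volume (dcube A i k ∩ dcube A j (l + n)) :=
              Finset.mul_sum _ _ _
          _ = _ := Finset.sum_congr rfl fun n _ => (if_pos h1).symm
      · rw [if_neg hc]
        exact zero_le
    have key : (∑' (i : ℤ) (k : Fin d → ℤ),
        (if i ≤ j ∧ 0 < volume (dcube A i k ∩ dcube A j l) then
          volume (dcube A i k) ^ (1 / 2 : ℝ) * ENNReal.ofReal (‖c i k‖)
        else 0))
        ≤ ∑ n ∈ F, ∫⁻ x in dcube A j (l + n),
            ∑' (i : ℤ) (k : Fin d → ℤ),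
              (if i ≤ j then
                (dcube A i k).indicator
                  (fun _ => volume (dcube A i k) ^ (-(1 / 2 : ℝ)) *
                    ENNReal.ofReal (‖c i k‖)) x
              else 0) := by
      calc (∑' (i : ℤ) (k : Fin d → ℤ),
          (if i ≤ j ∧ 0 < volume (dcube A i k ∩ dcube A j l) then
            volume (dcube A i k) ^ (1 / 2 : ℝ) * ENNReal.ofReal (‖c i k‖)
          else 0))
          ≤ ∑' (i : ℤ) (k : Fin d → ℤ), ∑ n ∈ F,
            (if i ≤ j then
              volume (dcube A i k) ^ (-(1 / 2 : ℝ)) * ENNReal.ofReal (‖c i k‖) *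
                volume (dcube A i k ∩ dcube A j (l + n))
            else 0) :=
            ENNReal.tsum_le_tsum fun i => ENNReal.tsum_le_tsum fun k => step1 i k
        _ = ∑' (i : ℤ), ∑ n ∈ F, ∑' (k : Fin d → ℤ),
            (if i ≤ j then
              volume (dcube A i k) ^ (-(1 / 2 : ℝ)) * ENNReal.ofReal (‖c i k‖) *
                volume (dcube A i k ∩ dcube A j (l + n))
            else 0) :=
            tsum_congr fun i => Summable.tsum_finsetSum fun n _ => ENNReal.summable
        _ = ∑ n ∈ F, ∑' (i : ℤ) (k : Fin d → ℤ),
            (if i ≤ j then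
              volume (dcube A i k) ^ (-(1 / 2 : ℝ)) * ENNReal.ofReal (‖c i k‖) *
                volume (dcube A i k ∩ dcube A j (l + n))
            else 0) :=
            Summable.tsum_finsetSum fun n _ => ENNReal.summable
        _ = _ := Finset.sum_congr rfl fun n _ => (integral_eq A c j (l + n)).symm
    have hbound : ∀ n ∈ F, (∫⁻ x in dcube A j (l + n),
        ∑' (i : ℤ) (k : Fin d → ℤ),
          (if i ≤ j then
            (dcube A i k).indicator
              (fun _ => volume (dcube A i k) ^ (-(1 / 2 : ℝ)) *
                ENNReal.ofReal (‖c i k‖)) x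
          else 0))
        ≤ volume (dcube A j l) * fNormInfOne A c := by
      intro n _
      have h1 : (volume (dcube A j (l + n)))⁻¹ * (∫⁻ x in dcube A j (l + n),
          ∑' (i : ℤ) (k : Fin d → ℤ),
            (if i ≤ j then
              (dcube A i k).indicator
                (fun _ => volume (dcube A i k) ^ (-(1 / 2 : ℝ)) *
                  ENNReal.ofReal (‖c i k‖)) x
            else 0)) ≤ fNormInfOne A c := by
        unfold fNormInfOne
        exact le_iSup₂ (f := fun (j : ℤ) (l : Fin d → ℤ) =>
          (volume (dcube A j l))⁻¹ * ∫⁻ x in dcube A j l,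
            ∑' (i : ℤ) (k : Fin d → ℤ),
              (if i ≤ j then
                (dcube A i k).indicator
                  (fun _ => volume (dcube A i k) ^ (-(1 / 2 : ℝ)) *
                    ENNReal.ofReal (‖c i k‖)) x
              else 0)) j (l + n)
      have h2 : (∫⁻ x in dcube A j (l + n),
          ∑' (i : ℤ) (k : Fin d → ℤ),
            (if i ≤ j then
              (dcube A i k).indicator
                (fun _ => volume (dcube A i k) ^ (-(1 / 2 : ℝ)) *
                  ENNReal.ofReal (‖c i k‖)) x
            else 0))
          = volume (dcube A j (l + n)) * ((volume (dcube A j (l + n)))⁻¹ *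
            (∫⁻ x in dcube A j (l + n),
              ∑' (i : ℤ) (k : Fin d → ℤ),
                (if i ≤ j then
                  (dcube A i k).indicator
                    (fun _ => volume (dcube A i k) ^ (-(1 / 2 : ℝ)) *
                      ENNReal.ofReal (‖c i k‖)) x
                else 0))) := by
        rw [← mul_assoc, ENNReal.mul_inv_cancel (volume_dcube_pos hdet j _).ne'
          (volume_dcube_ne_top A j _), one_mul]
      calc _ = _ := h2
        _ ≤ volume (dcube A j (l + n)) * fNormInfOne A c := mul_le_mul_right h1 _
        _ = volume (dcube A j l) * fNormInfOne A c := by rw [volume_dcube_eq A j (l + n) l]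
    calc (volume (dcube A j l))⁻¹ * (∑' (i : ℤ) (k : Fin d → ℤ),
        (if i ≤ j ∧ 0 < volume (dcube A i k ∩ dcube A j l) then
          volume (dcube A i k) ^ (1 / 2 : ℝ) * ENNReal.ofReal (‖c i k‖)
        else 0))
        ≤ (volume (dcube A j l))⁻¹ * ∑ n ∈ F, (volume (dcube A j l) * fNormInfOne A c) :=
          mul_le_mul_right (key.trans (Finset.sum_le_sum hbound)) _
      _ = (volume (dcube A j l))⁻¹ * ((F.card : ℝ≥0∞) *
          (volume (dcube A j l) * fNormInfOne A c)) := by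
          rw [Finset.sum_const, nsmul_eq_mul]
      _ = (F.card : ℝ≥0∞) * fNormInfOne A c := by
          rw [mul_left_comm, ← mul_assoc (volume (dcube A j l))⁻¹,
            ENNReal.inv_mul_cancel hv0 hvt, one_mul]
end

section
/- Let 𝒟 be a countable collection of measurable subsets of ℝ^d of finite positive measure, let a = (a_D)_{D∈𝒟} be nonnegative reals, and C > 0. Then the following are equivalent: (i) for every subcollection 𝒟' ⊆ 𝒟 one has ∑_{D∈𝒟'} a_D ≤ C·m(⋃_{D∈𝒟'} D); (ii) for every family b = (b_D)_{D∈𝒟} of nonnegative reals one has ∑_{D∈𝒟} a_D b_D ≤ C·∫_{ℝ^d} sup_{D∈𝒟} b_D 𝟙_D(x) dx. -/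
open MeasureTheory
open scoped ENNReal NNReal

private lemma inner_layer (c : ℝ≥0∞) :
    ∫⁻ t in Set.Ioi (0:ℝ), {t : ℝ | ENNReal.ofReal t < c}.indicator (fun _ => (1:ℝ≥0∞)) t = c := by
  have hS : MeasurableSet {t : ℝ | ENNReal.ofReal t < c} :=
    ENNReal.measurable_ofReal (measurableSet_Iio (a := c))
  rw [show (fun _ : ℝ => (1:ℝ≥0∞)) = (1 : ℝ → ℝ≥0∞) from rfl, lintegral_indicator_one hS,
    Measure.restrict_apply hS]
  by_cases hc : c = ⊤
  · subst hc
    have : {t : ℝ | ENNReal.ofReal t < ⊤} ∩ Set.Ioi 0 = Set.Ioi 0 := by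
      ext t; simp [ENNReal.ofReal_lt_top]
    rw [this, Real.volume_Ioi]
  · have : {t : ℝ | ENNReal.ofReal t < c} ∩ Set.Ioi 0 = Set.Ioo 0 c.toReal := by
      ext t
      constructor
      · rintro ⟨h1, h2⟩
        exact ⟨h2, (ENNReal.ofReal_lt_iff_lt_toReal (le_of_lt h2) hc).1 h1⟩
      · rintro ⟨h1, h2⟩
        exact ⟨(ENNReal.ofReal_lt_iff_lt_toReal (le_of_lt h1) hc).2 h2, h1⟩
    rw [this, Real.volume_Ioo, sub_zero, ENNReal.ofReal_toReal hc]

private lemma layer_le {α : Type*} [MeasurableSpace α] (μ : Measure α) [SigmaFinite μ]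
    (f : α → ℝ≥0∞) (hf : Measurable f) :
    ∫⁻ t in Set.Ioi (0:ℝ), μ {x | ENNReal.ofReal t < f x} ≤ ∫⁻ x, f x ∂μ := by
  have hPset : MeasurableSet {p : ℝ × α | ENNReal.ofReal p.1 < f p.2} :=
    measurableSet_lt (ENNReal.measurable_ofReal.comp measurable_fst) (hf.comp measurable_snd)
  have hP : Measurable fun p : ℝ × α =>
      {p : ℝ × α | ENNReal.ofReal p.1 < f p.2}.indicator (fun _ => (1:ℝ≥0∞)) p :=
    measurable_const.indicator hPset
  calc ∫⁻ t in Set.Ioi (0:ℝ), μ {x | ENNReal.ofReal t < f x}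
      = ∫⁻ t in Set.Ioi (0:ℝ), ∫⁻ x,
          {p : ℝ × α | ENNReal.ofReal p.1 < f p.2}.indicator (fun _ => (1:ℝ≥0∞)) (t, x) ∂μ := by
        refine lintegral_congr fun t => ?_
        have hset : MeasurableSet {x | ENNReal.ofReal t < f x} := hf measurableSet_Ioi
        rw [show (fun x => ({p : ℝ × α | ENNReal.ofReal p.1 < f p.2}.indicator
            (fun _ => (1:ℝ≥0∞)) (t, x))) =
            (fun x => {x | ENNReal.ofReal t < f x}.indicator (1 : α → ℝ≥0∞) x) from ?_,
          lintegral_indicator_one hset]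
        funext x
        by_cases hx : ENNReal.ofReal t < f x <;>
          simp [Set.indicator, hx]
    _ = ∫⁻ x, (∫⁻ t in Set.Ioi (0:ℝ),
          {p : ℝ × α | ENNReal.ofReal p.1 < f p.2}.indicator (fun _ => (1:ℝ≥0∞)) (t, x)) ∂μ :=
        lintegral_lintegral_swap hP.aemeasurable
    _ = ∫⁻ x, f x ∂μ := by
        refine lintegral_congr fun x => ?_
        have : (fun t => ({p : ℝ × α | ENNReal.ofReal p.1 < f p.2}.indicator
            (fun _ => (1:ℝ≥0∞)) (t, x))) =
            fun t => {t : ℝ | ENNReal.ofReal t < f x}.indicator (fun _ => (1:ℝ≥0∞)) t := by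
          funext t
          by_cases ht : ENNReal.ofReal t < f x <;> simp [Set.indicator, ht]
        rw [this, inner_layer]
    _ ≤ ∫⁻ x, f x ∂μ := le_rfl

/-- Carleson/testing duality: a nonnegative sequence over a countable collection of
measurable sets of finite positive measure is `C`-Carleson if and only if the dual
testing inequality holds with the same constant. -/
theorem stmt13 {d : ℕ} {ι : Type*} [Countable ι]
    (D : ι → Set (EuclideanSpace ℝ (Fin d)))
    (hmeas : ∀ i, MeasurableSet (D i))
    (hpos : ∀ i, 0 < volume (D i)) (hfin : ∀ i, volume (D i) < ⊤)
    (a : ι → ℝ≥0) (C : ℝ≥0) (hC : 0 < C) :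
    (∀ s : Set ι, ∑' i : s, (a i : ℝ≥0∞) ≤ C * volume (⋃ i ∈ s, D i)) ↔
      (∀ b : ι → ℝ≥0, ∑' i, (a i : ℝ≥0∞) * b i ≤
        C * ∫⁻ x, ⨆ i, (D i).indicator (fun _ => (b i : ℝ≥0∞)) x) := by
  classical
  constructor
  · intro h b
    set f : EuclideanSpace ℝ (Fin d) → ℝ≥0∞ :=
      fun x => ⨆ i, (D i).indicator (fun _ => (b i : ℝ≥0∞)) x with hf_def
    have hfmeas : Measurable f :=
      Measurable.iSup fun i => measurable_const.indicator (hmeas i)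
    have step1 : ∀ i, (a i : ℝ≥0∞) * b i =
        ∫⁻ t in Set.Ioi (0:ℝ), (Set.Ioo (0:ℝ) (b i)).indicator (fun _ => (a i : ℝ≥0∞)) t := by
      intro i
      rw [lintegral_indicator_const measurableSet_Ioo, Measure.restrict_apply measurableSet_Ioo,
        Set.Ioo_inter_Ioi, max_self, Real.volume_Ioo, sub_zero, ENNReal.ofReal_coe_nnreal]
    calc ∑' i, (a i : ℝ≥0∞) * b i
        = ∫⁻ t in Set.Ioi (0:ℝ), ∑' i,
            (Set.Ioo (0:ℝ) (b i)).indicator (fun _ => (a i : ℝ≥0∞)) t := by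
          rw [lintegral_tsum fun i =>
            (measurable_const.indicator measurableSet_Ioo).aemeasurable]
          exact tsum_congr step1
      _ ≤ ∫⁻ t in Set.Ioi (0:ℝ), (C : ℝ≥0∞) * volume {x | ENNReal.ofReal t < f x} := by
          refine setLIntegral_mono' measurableSet_Ioi fun t ht => ?_
          have hsum : ∑' i, (Set.Ioo (0:ℝ) (b i)).indicator (fun _ => (a i : ℝ≥0∞)) t
              = ∑' i : {i | (t : ℝ) < b i}, (a i : ℝ≥0∞) := by
            rw [tsum_subtype {i | (t : ℝ) < b i} (fun i => (a i : ℝ≥0∞))]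
            refine tsum_congr fun i => ?_
            by_cases hi : (t : ℝ) < b i <;>
              simp [Set.indicator, hi, ht, Set.mem_Ioo, Set.mem_Ioi.1 ht]
          rw [hsum]
          refine (h _).trans (mul_le_mul_right (measure_mono ?_) _)
          rintro x hx
          simp only [Set.mem_iUnion] at hx
          obtain ⟨i, hi, hxi⟩ := hx
          have h1 : ENNReal.ofReal t < (b i : ℝ≥0∞) := by
            rw [← ENNReal.ofReal_coe_nnreal]
            exact ENNReal.ofReal_lt_ofReal_iff ((Set.mem_Ioi.1 ht).trans hi) |>.2 hi
          refine Set.mem_setOf_eq ▸ lt_of_lt_of_le h1 ?_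
          refine le_trans ?_ (le_iSup _ i)
          simp [Set.indicator, hxi]
      _ = (C : ℝ≥0∞) * ∫⁻ t in Set.Ioi (0:ℝ), volume {x | ENNReal.ofReal t < f x} :=
          lintegral_const_mul' _ _ ENNReal.coe_ne_top
      _ ≤ (C : ℝ≥0∞) * ∫⁻ x, f x :=
          mul_le_mul_right (layer_le volume f hfmeas) _
  · intro h s
    set b : ι → ℝ≥0 := s.indicator 1 with hb_def
    have h1 : ∑' i : s, (a i : ℝ≥0∞) = ∑' i, (a i : ℝ≥0∞) * b i := by
      rw [tsum_subtype s (fun i => (a i : ℝ≥0∞))]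
      refine tsum_congr fun i => ?_
      by_cases hi : i ∈ s <;> simp [hb_def, Set.indicator, hi]
    have hU : MeasurableSet (⋃ i ∈ s, D i) :=
      MeasurableSet.biUnion (Set.to_countable s) fun i _ => hmeas i
    have h2 : ∫⁻ x, ⨆ i, (D i).indicator (fun _ => (b i : ℝ≥0∞)) x ≤ volume (⋃ i ∈ s, D i) := by
      rw [← lintegral_indicator_one hU]
      refine lintegral_mono fun x => ?_
      refine iSup_le fun i => ?_
      by_cases hi : i ∈ s
      · by_cases hx : x ∈ D i
        · have hxU : x ∈ ⋃ i ∈ s, D i := Set.mem_biUnion hi hx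
          simp [Set.indicator, hx, hxU, hb_def, hi]
        · simp [Set.indicator, hx]
      · simp [hb_def, Set.indicator, hi]
    exact h1 ▸ (h b).trans (mul_le_mul_right h2 _)
end

section
/- Let A, B ∈ GL(d, ℝ) be expansive matrices, and let Q, P ⊆ ℝ^d be open sets with closures compact in ℝ^d \ {0} such that (A^iQ)_{i∈ℤ} and (B^jP)_{j∈ℤ} each cover ℝ^d \ {0}. Suppose sup_{j∈ℤ} |I_j| = ∞ where I_j = {i ∈ ℤ : A^iQ ∩ B^jP ≠ ∅}, and let N ∈ ℕ. Then for every K ∈ ℕ there exist j₀ ∈ ℤ, points η₁,…,η_K ∈ ℝ^d, a strictly increasing sequence i₁,…,i_K ∈ ℤ with |i_k − i_{k'}| > 2N for k ≠ k', and δ₀ > 0 such that B_{δ₀}(η_k) ⊆ A^{i_k}Q ∩ B^{j₀}P for all k = 1,…,K. -/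
open MeasureTheory
open scoped Pointwise

lemma ms_continuous {d : ℕ} (M : Matrix (Fin d) (Fin d) ℝ) : Continuous (ms M) := by
  have h : IsLinearMap ℝ (ms (d := d) M) :=
    ⟨fun x y => by simp [ms, Matrix.mulVec_add], fun c x => by simp [ms, Matrix.mulVec_smul]⟩
  exact (h.mk' _).continuous_of_finiteDimensional

lemma ms_open {d : ℕ} (M M' : Matrix (Fin d) (Fin d) ℝ) (h : M' * M = 1)
    (Q : Set (EuclideanSpace ℝ (Fin d))) (hQ : IsOpen Q) : IsOpen (ms M '' Q) := by
  have h2 : M * M' = 1 := mul_eq_one_comm.mp h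
  have himg : ms M '' Q = ms M' ⁻¹' Q := by
    ext x
    simp only [Set.mem_image, Set.mem_preimage]
    constructor
    · rintro ⟨q, hq, rfl⟩
      simp only [ms, WithLp.ofLp_toLp]
      rw [Matrix.mulVec_mulVec, h, Matrix.one_mulVec]
      exact hq
    · intro hx
      refine ⟨ms M' x, hx, ?_⟩
      simp only [ms, WithLp.ofLp_toLp]
      rw [Matrix.mulVec_mulVec, h2, Matrix.one_mulVec]
  rw [himg]
  exact hQ.preimage (ms_continuous M')

lemma ms_zpow_open {d : ℕ} (A : Matrix (Fin d) (Fin d) ℝ) (hA : IsUnit A) (i : ℤ)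
    (Q : Set (EuclideanSpace ℝ (Fin d))) (hQ : IsOpen Q) : IsOpen (ms (A ^ i) '' Q) := by
  have hdet : IsUnit A.det := (Matrix.isUnit_iff_isUnit_det A).mp hA
  refine ms_open (A ^ i) (A ^ (-i)) ?_ Q hQ
  rw [← Matrix.zpow_add hdet, neg_add_cancel, zpow_zero]

lemma strictMono_int_gap {n : ℕ} (g : Fin n → ℤ) (hg : StrictMono g) :
    ∀ m : ℕ, ∀ a b : Fin n, (b : ℕ) = (a : ℕ) + m → (m : ℤ) ≤ g b - g a := by
  intro m
  induction m with
  | zero =>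
    intro a b hab
    have : a = b := Fin.ext (by omega)
    simp [this]
  | succ m ih =>
    intro a b hab
    have hc : (a : ℕ) + m < n := by omega
    set c : Fin n := ⟨(a : ℕ) + m, hc⟩
    have h1 : (m : ℤ) ≤ g c - g a := ih a c rfl
    have h2 : g c < g b := hg (by simp [c, Fin.lt_def]; omega)
    push_cast
    omega

/-- If `sup_j |I_j| = ∞`, then for every `K` there are `j₀`, a ball radius `δ₀ > 0`,
points `η_k` and a strictly increasing `2N`-separated sequence `i_k` with
`B_{δ₀}(η_k) ⊆ A^{i_k} Q ∩ B^{j₀} P` for all `k`. -/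
theorem stmt16 {d : ℕ} (A B : Matrix (Fin d) (Fin d) ℝ)
    (hA : Expansive A) (hB : Expansive B)
    (Q P : Set (EuclideanSpace ℝ (Fin d))) (hQo : IsOpen Q) (hPo : IsOpen P)
    (hQc : IsCompact (closure Q)) (hPc : IsCompact (closure P))
    (hQ0 : (0 : EuclideanSpace ℝ (Fin d)) ∉ closure Q)
    (hP0 : (0 : EuclideanSpace ℝ (Fin d)) ∉ closure P)
    (hQcov : {x : EuclideanSpace ℝ (Fin d) | x ≠ 0} ⊆ ⋃ i : ℤ, ms (A ^ i) '' Q)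
    (hPcov : {x : EuclideanSpace ℝ (Fin d) | x ≠ 0} ⊆ ⋃ j : ℤ, ms (B ^ j) '' P)
    (N : ℕ)
    (hsup : ∀ M : ℕ, ∃ j : ℤ, ∃ S : Finset ℤ, M ≤ S.card ∧
      ∀ i ∈ S, (ms (A ^ i) '' Q ∩ ms (B ^ j) '' P).Nonempty) :
    ∀ K : ℕ, ∃ (j₀ : ℤ) (η : Fin K → EuclideanSpace ℝ (Fin d)) (idx : Fin K → ℤ)
      (δ₀ : ℝ), 0 < δ₀ ∧ StrictMono idx ∧
        (∀ k k' : Fin K, k ≠ k' → 2 * (N : ℤ) < |idx k - idx k'|) ∧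
        ∀ k : Fin K, Metric.ball (η k) δ₀ ⊆ ms (A ^ idx k) '' Q ∩ ms (B ^ j₀) '' P := by
  intro K
  rcases Nat.eq_zero_or_pos K with hK | hK
  · subst hK
    exact ⟨0, Fin.elim0, Fin.elim0, 1, one_pos, fun a => a.elim0,
      fun k => k.elim0, fun k => k.elim0⟩
  obtain ⟨j₀, S, hScard, hSne⟩ := hsup (K * (2 * N + 1))
  -- the order embedding from Fin S.card into ℤ
  set n := S.card with hn
  let g : Fin n ↪o ℤ := S.orderEmbOfFin rfl
  have hgmem : ∀ i : Fin n, g i ∈ S := fun i => S.orderEmbOfFin_mem rfl i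
  have hpos : ∀ k : Fin K, (k : ℕ) * (2 * N + 1) < n := by
    intro k
    have hk : (k : ℕ) < K := k.isLt
    calc (k : ℕ) * (2 * N + 1) < K * (2 * N + 1) := by
          exact (Nat.mul_lt_mul_right (by omega)).mpr hk
      _ ≤ n := hScard
  set f : Fin K → Fin n := fun k => ⟨(k : ℕ) * (2 * N + 1), hpos k⟩ with hf
  set idx : Fin K → ℤ := fun k => g (f k) with hidx
  have hfmono : StrictMono f := by
    intro a b hab
    simp only [hf, Fin.lt_def]
    exact (Nat.mul_lt_mul_right (by omega)).mpr hab
  have hidxmono : StrictMono idx := fun a b hab => g.strictMono (hfmono hab)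
  -- gap estimate
  have hgap : ∀ a b : Fin K, a < b → 2 * (N : ℤ) < idx b - idx a := by
    intro a b hab
    have hba : (b : ℕ) * (2 * N + 1) = (a : ℕ) * (2 * N + 1) +
        ((b : ℕ) - (a : ℕ)) * (2 * N + 1) := by
      have : (a : ℕ) < (b : ℕ) := hab
      rw [← Nat.add_mul]; congr 1; omega
    have := strictMono_int_gap (fun i => g i) g.strictMono
      (((b : ℕ) - (a : ℕ)) * (2 * N + 1)) (f a) (f b) hba
    have hge : (2 * N + 1 : ℤ) ≤ (((b : ℕ) - (a : ℕ)) * (2 * N + 1) : ℕ) := by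
      have : 1 ≤ (b : ℕ) - (a : ℕ) := by have : (a : ℕ) < (b : ℕ) := hab; omega
      push_cast
      nlinarith [this]
    simp only [hidx] at *
    omega
  -- choose points and radii
  have hball : ∀ k : Fin K, ∃ η : EuclideanSpace ℝ (Fin d), ∃ δ > 0,
      Metric.ball η δ ⊆ ms (A ^ idx k) '' Q ∩ ms (B ^ j₀) '' P := by
    intro k
    obtain ⟨x, hx⟩ := hSne (idx k) (hgmem (f k))
    have hopen : IsOpen (ms (A ^ idx k) '' Q ∩ ms (B ^ j₀) '' P) :=
      (ms_zpow_open A hA.1 (idx k) Q hQo).inter (ms_zpow_open B hB.1 j₀ P hPo)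
    obtain ⟨δ, hδ, hsub⟩ := Metric.isOpen_iff.mp hopen x hx
    exact ⟨x, δ, hδ, hsub⟩
  choose η δ hδpos hδsub using hball
  have hne : (Finset.univ : Finset (Fin K)).Nonempty := by
    simpa [Finset.univ_nonempty_iff] using Fin.pos_iff_nonempty.mp hK
  refine ⟨j₀, η, idx, Finset.univ.inf' hne δ, ?_, hidxmono, ?_, ?_⟩
  · exact (Finset.lt_inf'_iff hne).mpr fun k _ => hδpos k
  · intro k k' hkk'
    rcases lt_or_gt_of_ne hkk' with h | h
    · have := hgap k k' h
      rw [abs_sub_comm, abs_of_pos (by omega)]; omega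
    · have := hgap k' k h
      rw [abs_of_pos (by omega)]; omega
  · intro k
    refine Set.Subset.trans ?_ (hδsub k)
    exact Metric.ball_subset_ball (Finset.inf'_le _ (Finset.mem_univ k))
end
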